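/- Let (Ω, F, P) be a probability space with an atomic biparameter (F4)-filtration (F_{i,j}), all atoms of positive measure, and F⁻_{i,j} = F_{i−1,j} ∨ F_{i,j−1}. Suppose for each (i,j) ∈ [1,N]×[1,M], A_{i,j} is an atom of F⁻_{i,j} and B_{i,j} ⊆ A_{i,j} is an atom of F_{i,j}, with B_{i−1,j} ∩ B_{i,j−1} = A_{i,j} for i,j ≥ 2, B_{i−1,1} = A_{i,1} for i ≥ 2, B_{1,j−1} = A_{1,j} for j ≥ 2, and A_{1,1} = Ω. Then for all 1 ≤ n ≤ N, 1 ≤ m ≤ M: ∏_{i=1}^{n} ∏_{j=1}^{m} P(B_{i,j})/P(A_{i,j}) = P(B_{n,m}). -/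

import Mathlib

open MeasureTheory

lemma piece_subset_or_disjoint {Ω : Type*} {ι : Type*} (a : ι → Set Ω)
    (hdisj : Pairwise (Function.onFun Disjoint a))
    {s : Set Ω} (hs : MeasurableSet[MeasurableSpace.generateFrom (Set.range a)] s) :
    ∀ k, a k ⊆ s ∨ Disjoint (a k) s := by
  induction s, hs using MeasurableSpace.generateFrom_induction with
  | hC t ht _ =>
      obtain ⟨k', rfl⟩ := ht
      intro k
      rcases eq_or_ne k k' with rfl | hne
      · exact Or.inl subset_rfl
      · exact Or.inr (hdisj hne)
  | empty => exact fun k => Or.inr (Set.disjoint_empty _)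
  | compl t ht ih =>
      intro k
      rcases ih k with h | h
      · exact Or.inr (disjoint_compl_right.mono_left h)
      · exact Or.inl fun x hx hxt => Set.disjoint_left.mp h hx hxt
  | iUnion f hf ih =>
      intro k
      by_cases h : ∃ n, a k ⊆ f n
      · obtain ⟨n, hn⟩ := h
        exact Or.inl (hn.trans (Set.subset_iUnion f n))
      · push_neg at h
        refine Or.inr (Set.disjoint_iUnion_right.mpr fun n => ?_)
        rcases ih n k with h' | h'
        · exact absurd h' (h n)
        · exact h'

lemma constant_on_piece' {Ω : Type*} {ι : Type*} (a : ι → Set Ω)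
    (hdisj : Pairwise (Function.onFun Disjoint a)) {g : Ω → ℝ}
    (hg : Measurable[MeasurableSpace.generateFrom (Set.range a)] g)
    {k : ι} {x y : Ω} (hx : x ∈ a k) (hy : y ∈ a k) : g x = g y := by
  have hs := piece_subset_or_disjoint a hdisj (hg (measurableSet_singleton (g x))) k
  rcases hs with h | h
  · exact (h hy).symm
  · exact absurd rfl (Set.disjoint_left.mp h hx)

/-- `A` is an atom of the σ-field `m'`. -/
def IsAtomOf {Ω : Type*} (m' : MeasurableSpace Ω) (A : Set Ω) : Prop :=
  MeasurableSet[m'] A ∧ A.Nonempty ∧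
    ∀ B : Set Ω, MeasurableSet[m'] B → B ⊆ A → B = ∅ ∨ B = A

lemma atom_eq_piece' {Ω : Type*} {ι : Type*} (a : ι → Set Ω)
    (hdisj : Pairwise (Function.onFun Disjoint a)) (hcover : (⋃ k, a k) = Set.univ)
    (hne : ∀ k, (a k).Nonempty) {S : Set Ω}
    (hS : IsAtomOf (MeasurableSpace.generateFrom (Set.range a)) S) : ∃ k, a k = S := by
  obtain ⟨hSm, ⟨x, hxS⟩, hmin⟩ := hS
  have hx : x ∈ ⋃ k, a k := hcover ▸ Set.mem_univ x
  obtain ⟨k, hk⟩ := Set.mem_iUnion.mp hx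
  have hsub : a k ⊆ S := by
    rcases piece_subset_or_disjoint a hdisj hSm k with h | h
    · exact h
    · exact absurd hxS (Set.disjoint_left.mp h hk)
  rcases hmin (a k) (MeasurableSpace.measurableSet_generateFrom ⟨k, rfl⟩) hsub with h | h
  · exact absurd h (hne k).ne_empty
  · exact ⟨k, h⟩

lemma int_indicator {Ω : Type*} {m : MeasurableSpace Ω} (P : Measure Ω) [IsProbabilityMeasure P]
    {B' : Set Ω} (hB' : MeasurableSet B') (S : Set Ω) :
    ∫ x in S, B'.indicator (fun _ => (1:ℝ)) x ∂P = (P (B' ∩ S)).toReal := by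
  rw [setIntegral_indicator hB', setIntegral_const, Set.inter_comm]
  simp [Measure.real]

lemma int_const_on {Ω : Type*} {m : MeasurableSpace Ω} (P : Measure Ω) [IsProbabilityMeasure P]
    {g : Ω → ℝ} {S : Set Ω} (hS : MeasurableSet S) {c : ℝ} (h : ∀ x ∈ S, g x = c) :
    ∫ x in S, g x ∂P = c * (P S).toReal := by
  rw [setIntegral_congr_fun hS h, setIntegral_const]
  simp [mul_comm, Measure.real]

lemma indic_integrable {Ω : Type*} {m : MeasurableSpace Ω} (P : Measure Ω)
    [IsProbabilityMeasure P] {B' : Set Ω} (hB' : MeasurableSet B') :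
    Integrable (B'.indicator (fun _ => (1:ℝ))) P :=
  (integrable_const (1:ℝ)).indicator hB'

lemma indep_key {Ω : Type*} {m : MeasurableSpace Ω} (P : Measure Ω) [IsProbabilityMeasure P]
    {G₀ G₁ G₂ : MeasurableSpace Ω} (h₀ : G₀ ≤ m) (h₁ : G₁ ≤ m) (h₂ : G₂ ≤ m)
    {ι₀ : Type*} (a₀ : ι₀ → Set Ω) (hd₀ : Pairwise (Function.onFun Disjoint a₀))
    (hcov₀ : (⋃ k, a₀ k) = Set.univ) (hne₀ : ∀ k, (a₀ k).Nonempty)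
    (hG₀ : G₀ = MeasurableSpace.generateFrom (Set.range a₀))
    (Bb B' B'' : Set Ω)
    (hcond : ∀ f : Ω → ℝ, Integrable f P → P[P[f|G₁]|G₂] =ᵐ[P] P[f|G₀])
    (hBatom : IsAtomOf G₀ Bb) (hB'' : MeasurableSet[G₂] B'')
    (hB' : MeasurableSet[G₁] B')
    (hsub' : B' ⊆ Bb) (hsub'' : B'' ⊆ Bb) :
    (P (B' ∩ B'')).toReal * (P Bb).toReal = (P B').toReal * (P B'').toReal := by
  have hBatom' : IsAtomOf (MeasurableSpace.generateFrom (Set.range a₀)) Bb := hG₀ ▸ hBatom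
  obtain ⟨hBm, ⟨x₀, hx₀⟩, -⟩ := hBatom
  set f : Ω → ℝ := B'.indicator (fun _ => 1) with hfdef
  have hB'm : MeasurableSet[m] B' := h₁ _ hB'
  have hfi : Integrable f P := indic_integrable P hB'm
  have hfG₁ : P[f|G₁] = f :=
    condExp_of_stronglyMeasurable h₁
      ((stronglyMeasurable_const : StronglyMeasurable[G₁] fun _ : Ω => (1:ℝ)).indicator hB') hfi
  have hmain : P[f|G₂] =ᵐ[P] P[f|G₀] := by
    have h := hcond f hfi; rwa [hfG₁] at h
  set g : Ω → ℝ := P[f|G₀] with hgdef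
  have hgmeas : Measurable[MeasurableSpace.generateFrom (Set.range a₀)] g := by
    rw [← hG₀]; exact stronglyMeasurable_condExp.measurable
  obtain ⟨k₀, hk₀⟩ := atom_eq_piece' a₀ hd₀ hcov₀ hne₀ hBatom'
  have hconst : ∀ x ∈ Bb, g x = g x₀ := fun x hx =>
    constant_on_piece' a₀ hd₀ hgmeas (hk₀ ▸ hx) (hk₀ ▸ hx₀)
  set c : ℝ := g x₀ with hcdef
  have hBmm : MeasurableSet[m] Bb := h₀ _ hBm
  have hgBb : ∫ x in Bb, g x ∂P = (P B').toReal := by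
    rw [hgdef, setIntegral_condExp h₀ hfi hBm, int_indicator P hB'm Bb,
      Set.inter_eq_left.mpr hsub']
  have hgconstBb : ∫ x in Bb, g x ∂P = c * (P Bb).toReal := int_const_on P hBmm hconst
  have hc : c * (P Bb).toReal = (P B').toReal := by rw [← hgconstBb, hgBb]
  have hB''m : MeasurableSet[m] B'' := h₂ _ hB''
  have h1 : ∫ x in B'', (P[f|G₂]) x ∂P = (P (B' ∩ B'')).toReal := by
    rw [setIntegral_condExp h₂ hfi hB'', int_indicator P hB'm B'']
  have h2 : ∫ x in B'', g x ∂P = c * (P B'').toReal :=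
    int_const_on P hB''m (fun x hx => hconst x (hsub'' hx))
  have h3 : (P (B' ∩ B'')).toReal = c * (P B'').toReal := by
    rw [← h1, ← h2]
    exact integral_congr_ae (ae_restrict_of_ae hmain)
  rw [h3, ← hc]; ring

/-- The telescoping product formula for chains of atoms of an atomic biparameter
(F4)-filtration: `∏_{i=1}^n ∏_{j=1}^m P(B_{i,j})/P(A_{i,j}) = P(B_{n,m})`. -/
theorem atom_product_formula
    {Ω : Type*} {m : MeasurableSpace Ω}
    (P : Measure Ω) [IsProbabilityMeasure P]
    (N M : ℕ)
    (F : ℕ → ℕ → MeasurableSpace Ω)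
    (hle : ∀ i j, F i j ≤ m)
    (hmono₁ : ∀ i j, F i j ≤ F (i + 1) j) (hmono₂ : ∀ i j, F i j ≤ F i (j + 1))
    (htriv : ∀ i j, F i 0 = ⊥ ∧ F 0 j = ⊥)
    -- each `F i j` is atomic with atoms of positive measure
    (hatomic : ∀ i j, ∃ (ι : Type) (_ : Countable ι) (a : ι → Set Ω),
      Pairwise (Function.onFun Disjoint a) ∧ (⋃ k, a k) = Set.univ ∧
      (∀ k, 0 < P (a k)) ∧ F i j = MeasurableSpace.generateFrom (Set.range a))
    -- the (F4) condition
    (hF4 : ∀ f : Ω → ℝ, Integrable f P → ∀ i j i' j',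
      P[ (P[f | F i j]) | F i' j'] =ᵐ[P] P[f | F (min i i') (min j j')])
    -- the chains of atoms `A_{i,j} ∈ at F⁻_{i,j}` and `B_{i,j} ∈ at F_{i,j}`,
    -- `B_{i,j} ⊆ A_{i,j}`
    (A B : ℕ → ℕ → Set Ω)
    (hA : ∀ i j, 1 ≤ i → i ≤ N → 1 ≤ j → j ≤ M →
      IsAtomOf (F (i - 1) j ⊔ F i (j - 1)) (A i j))
    (hB : ∀ i j, 1 ≤ i → i ≤ N → 1 ≤ j → j ≤ M →
      IsAtomOf (F i j) (B i j) ∧ B i j ⊆ A i j)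
    -- the compatibility (ancestor) relations
    (hrec : ∀ i j, 2 ≤ i → i ≤ N → 2 ≤ j → j ≤ M → B (i - 1) j ∩ B i (j - 1) = A i j)
    (hrow : ∀ i, 2 ≤ i → i ≤ N → B (i - 1) 1 = A i 1)
    (hcol : ∀ j, 2 ≤ j → j ≤ M → B 1 (j - 1) = A 1 j)
    (h11 : A 1 1 = Set.univ) :
    ∀ n mm, 1 ≤ n → n ≤ N → 1 ≤ mm → mm ≤ M →
      ∏ i ∈ Finset.Icc 1 n, ∏ j ∈ Finset.Icc 1 mm,
          (P (B i j)).toReal / (P (A i j)).toReal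
        = (P (B n mm)).toReal := by
  -- positivity of the atoms in the chains
  have hposB : ∀ i j, 1 ≤ i → i ≤ N → 1 ≤ j → j ≤ M → 0 < (P (B i j)).toReal := by
    intro i j hi hiN hj hjM
    obtain ⟨ι, _, a, hd, hcov, hpos, hgen⟩ := hatomic i j
    have hatom : IsAtomOf (MeasurableSpace.generateFrom (Set.range a)) (B i j) :=
      hgen ▸ (hB i j hi hiN hj hjM).1
    obtain ⟨k, hk⟩ := atom_eq_piece' a hd hcov
      (fun k => nonempty_of_measure_ne_zero (hpos k).ne') hatom
    rw [← hk]
    exact ENNReal.toReal_pos (hpos k).ne' (measure_ne_top P _)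
  have hposA : ∀ i j, 1 ≤ i → i ≤ N → 1 ≤ j → j ≤ M → 0 < (P (A i j)).toReal := by
    intro i j hi hiN hj hjM
    have h1 := hposB i j hi hiN hj hjM
    have h2 : P (B i j) ≤ P (A i j) := measure_mono (hB i j hi hiN hj hjM).2
    have := ENNReal.toReal_mono (measure_ne_top P _) h2
    linarith
  -- the key independence identity from (F4)
  have key : ∀ n mm, 2 ≤ n → n ≤ N → 2 ≤ mm → mm ≤ M →
      (P (A n mm)).toReal * (P (B (n-1) (mm-1))).toReal
        = (P (B (n-1) mm)).toReal * (P (B n (mm-1))).toReal := by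
    intro n mm hn2 hnN hm2 hmM
    obtain ⟨ι, _, a, hd, hcov, hpos, hgen⟩ := hatomic (n-1) (mm-1)
    have hne : ∀ k, (a k).Nonempty := fun k => nonempty_of_measure_ne_zero (hpos k).ne'
    have hcond : ∀ f : Ω → ℝ, Integrable f P →
        P[P[f|F (n-1) mm]|F n (mm-1)] =ᵐ[P] P[f|F (n-1) (mm-1)] := by
      intro f hf
      have h := hF4 f hf (n-1) mm n (mm-1)
      rwa [min_eq_left (by omega), min_eq_right (by omega)] at h
    -- subset relations
    have hsub1 : B (n-1) mm ⊆ B (n-1) (mm-1) := by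
      have h1 : B (n-1) mm ⊆ A (n-1) mm :=
        (hB (n-1) mm (by omega) (by omega) (by omega) (by omega)).2
      rcases eq_or_lt_of_le hn2 with h2 | h3
      · have : A 1 mm = B 1 (mm-1) := (hcol mm hm2 hmM).symm
        rw [← h2] at h1 ⊢
        simpa [this] using h1
      · have := hrec (n-1) mm (by omega) (by omega) hm2 hmM
        refine h1.trans ?_
        rw [← this]
        exact Set.inter_subset_right
    have hsub2 : B n (mm-1) ⊆ B (n-1) (mm-1) := by
      have h1 : B n (mm-1) ⊆ A n (mm-1) :=
        (hB n (mm-1) (by omega) (by omega) (by omega) (by omega)).2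
      rcases eq_or_lt_of_le hm2 with h2 | h3
      · have : A n 1 = B (n-1) 1 := (hrow n hn2 hnN).symm
        rw [← h2] at h1 ⊢
        simpa [this] using h1
      · have := hrec n (mm-1) hn2 hnN (by omega) (by omega)
        refine h1.trans ?_
        rw [← this]
        exact Set.inter_subset_left
    have hAeq : B (n-1) mm ∩ B n (mm-1) = A n mm := hrec n mm hn2 hnN hm2 hmM
    have := indep_key P (hle (n-1) (mm-1)) (hle (n-1) mm) (hle n (mm-1)) a hd hcov hne hgen
      (B (n-1) (mm-1)) (B (n-1) mm) (B n (mm-1)) hcond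
      ((hB (n-1) (mm-1) (by omega) (by omega) (by omega) (by omega)).1)
      ((hB n (mm-1) (by omega) (by omega) (by omega) (by omega)).1.1)
      ((hB (n-1) mm (by omega) (by omega) (by omega) (by omega)).1.1)
      hsub1 hsub2
    rw [hAeq] at this
    linarith [this]
  -- row telescoping
  have hrowP : ∀ n, 1 ≤ n → n ≤ N → 1 ≤ M →
      (∏ i ∈ Finset.Icc 1 n, (P (B i 1)).toReal / (P (A i 1)).toReal)
        = (P (B n 1)).toReal := by
    intro n hn
    induction n, hn using Nat.le_induction with
    | base =>
        intro hN hM1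
        have hP1 : (P (A 1 1)).toReal = 1 := by
          rw [h11]; simp
        simp [Finset.Icc_self, hP1]
    | succ n hn ih =>
        intro hN hM1
        rw [Finset.prod_Icc_succ_top (by omega), ih (by omega) hM1]
        have hAeq : A (n+1) 1 = B n 1 := by
          have := hrow (n+1) (by omega) hN
          simpa using this.symm
        rw [hAeq]
        have h1 : (P (B n 1)).toReal ≠ 0 := (hposB n 1 hn (by omega) le_rfl hM1).ne'
        rw [mul_comm, div_mul_cancel₀ _ h1]
  -- column-increment telescoping using the key identity
  have hcolP : ∀ mm, 2 ≤ mm → mm ≤ M → ∀ n, 1 ≤ n → n ≤ N →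
      (∏ i ∈ Finset.Icc 1 n, (P (B i mm)).toReal / (P (A i mm)).toReal)
        = (P (B n mm)).toReal / (P (B n (mm-1))).toReal := by
    intro mm hm2 hmM n hn
    induction n, hn using Nat.le_induction with
    | base =>
        intro hN
        have hAeq : A 1 mm = B 1 (mm-1) := (hcol mm hm2 hmM).symm
        simp [Finset.Icc_self, hAeq]
    | succ n hn ih =>
        intro hN
        rw [Finset.prod_Icc_succ_top (by omega), ih (by omega)]
        have hkey := key (n+1) mm (by omega) hN hm2 hmM
        simp only [Nat.add_sub_cancel] at hkey
        have hb1 : (P (B n (mm-1))).toReal ≠ 0 :=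
          (hposB n (mm-1) hn (by omega) (by omega) (by omega)).ne'
        have hb2 : (P (B n mm)).toReal ≠ 0 :=
          (hposB n mm hn (by omega) (by omega) hmM).ne'
        have ha : (P (A (n+1) mm)).toReal ≠ 0 :=
          (hposA (n+1) mm (by omega) hN (by omega) hmM).ne'
        have hb3 : (P (B (n+1) (mm-1))).toReal ≠ 0 :=
          (hposB (n+1) (mm-1) (by omega) hN (by omega) (by omega)).ne'
        rw [div_mul_div_comm, div_eq_div_iff (by positivity) (by
          exact (hposB (n+1) (mm-1) (by omega) hN (by omega) (by omega)).ne')]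
        linear_combination (-(P (B (n+1) mm)).toReal) * hkey
  -- main induction on mm
  intro n mm hn hnN hm
  induction mm, hm using Nat.le_induction with
  | base =>
      intro hM
      have : ∀ i, (∏ j ∈ Finset.Icc 1 1, (P (B i j)).toReal / (P (A i j)).toReal)
          = (P (B i 1)).toReal / (P (A i 1)).toReal := by
        intro i; simp [Finset.Icc_self]
      rw [Finset.prod_congr rfl (fun i _ => this i)]
      exact hrowP n hn hnN (by omega)
  | succ mm hm ih =>
      intro hM
      have hsplit : ∀ i, (∏ j ∈ Finset.Icc 1 (mm+1), (P (B i j)).toReal / (P (A i j)).toReal)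
          = (∏ j ∈ Finset.Icc 1 mm, (P (B i j)).toReal / (P (A i j)).toReal) *
            ((P (B i (mm+1))).toReal / (P (A i (mm+1))).toReal) := by
        intro i
        exact Finset.prod_Icc_succ_top (by omega) _
      rw [Finset.prod_congr rfl (fun i _ => hsplit i), Finset.prod_mul_distrib,
        ih (by omega)]
      have hc := hcolP (mm+1) (by omega) hM n hn hnN
      simp only [Nat.add_sub_cancel] at hc
      rw [hc]
      have hb : (P (B n mm)).toReal ≠ 0 := (hposB n mm hn hnN hm (by omega)).ne'
      rw [mul_comm, div_mul_cancel₀ _ hb]
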